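/- arXiv:1610.02194 — 2 statements merged into one kernel-verified Lean document; each statement's English description precedes it below -/
import Mathlib

section
/- For any ordinal β that is additive principal (i.e., β = ω^γ for some γ), there exist unique ordinals β₁ ≤ β and β₂ < β such that β = φ β₁ β₂, where φ is the binary Veblen function. -/
open Ordinal

/-- `Ordinal.derivBFamily` as it stood in Mathlib (Dec 2024), since removed. -/
noncomputable def derivBFamily.{u, v} (o : Ordinal.{u})
    (f : ∀ b < o, Ordinal.{max u v} → Ordinal.{max u v}) :
    Ordinal.{max u v} → Ordinal.{max u v} :=
  derivFamily (familyOfBFamily o f)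

/-- The binary Veblen function: `veblen 0 β = ω ^ β`, and for `α > 0`,
`veblen α` enumerates the common fixed points of `veblen γ` for `γ < α`. -/
noncomputable def veblen : Ordinal → Ordinal → Ordinal :=
  WellFounded.fix Ordinal.lt_wf
    (fun α ih => if α = 0 then fun β => omega0 ^ β
      else derivBFamily.{0,0} α (fun ξ h => ih ξ h))

/-- The set of strongly critical ordinals. -/
def StronglyCritical (γ : Ordinal) : Prop := _root_.veblen γ 0 = γ

/-- `Gamma β` is the `β`-th strongly critical ordinal. -/
noncomputable def Gamma : Ordinal → Ordinal :=
  enumOrd {γ | StronglyCritical γ}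

/-- The least uncountable cardinal (as an ordinal) greater than `θ`. -/
noncomputable def OmegaB (θ : Ordinal) : Ordinal :=
  sInf {o | θ < o ∧ o.card.ord = o ∧ Cardinal.aleph0 < o.card}

/-- Closure of `{0, Ω} ∪ {Γ_β : β ≤ θ}` under `+`, `veblen` and the
given partial collapsing function `f` on arguments below `α`. -/
def closB (θ α : Ordinal) (f : ∀ ξ, ξ < α → Ordinal) : Set Ordinal :=
  ⋂₀ {S : Set Ordinal |
      0 ∈ S ∧ OmegaB θ ∈ S ∧ (∀ β ≤ θ, Gamma β ∈ S) ∧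
      (∀ x ∈ S, ∀ y ∈ S, x + y ∈ S) ∧
      (∀ x ∈ S, ∀ y ∈ S, _root_.veblen x y ∈ S) ∧
      (∀ ξ (h : ξ < α), ξ ∈ S → f ξ h ∈ S)}

/-- The relativised collapsing function `ψ_θ`. -/
noncomputable def psiB (θ : Ordinal) : Ordinal → Ordinal :=
  WellFounded.fix Ordinal.lt_wf
    (fun α ih => sInf {β | β ∉ closB θ α (fun ξ h => ih ξ h)})

/-- The relativised collapsing hierarchy `B_θ(α)`. -/
def BB (θ α : Ordinal) : Set Ordinal :=
  closB θ α (fun ξ _ => psiB θ ξ)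

/-- The least strongly critical ordinal strictly above `δ`. -/
noncomputable def gammaSucc (δ : Ordinal) : Ordinal :=
  sInf {γ | δ < γ ∧ StronglyCritical γ}

theorem isNormal_derivBFamily {o : Ordinal.{0}} (f : ∀ b < o, Ordinal.{0} → Ordinal.{0}) :
    Order.IsNormal (derivBFamily.{0,0} o f) :=
  isNormal_derivFamily _

theorem derivBFamily_fp {o : Ordinal.{0}} {f : ∀ b < o, Ordinal.{0} → Ordinal.{0}} {i : Ordinal.{0}}
    (hi : i < o) (H : Order.IsNormal (f i hi)) (a : Ordinal.{0}) :
    f i hi (derivBFamily.{0,0} o f a) = derivBFamily.{0,0} o f a := by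
  rw [← familyOfBFamily_enum o f i hi] at H ⊢
  exact derivFamily_fp H a

theorem fp_iff_derivBFamily {o : Ordinal.{0}} {f : ∀ b < o, Ordinal.{0} → Ordinal.{0}}
    (H : ∀ i hi, Order.IsNormal (f i hi)) {a : Ordinal.{0}} :
    (∀ i hi, f i hi a = a) ↔ ∃ b, derivBFamily.{0,0} o f b = a := by
  unfold derivBFamily
  rw [← fp_iff_derivFamily (f := familyOfBFamily o f) (fun j => H _ _)]
  exact ⟨fun h j => h _ _, fun h i hi => by rw [← familyOfBFamily_enum o f i hi]; exact h _⟩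

theorem veblen_def (α : Ordinal) : _root_.veblen α =
    if α = 0 then fun β => omega0 ^ β
      else derivBFamily.{0,0} α (fun ξ _ => _root_.veblen ξ) := by
  rw [_root_.veblen, WellFounded.fix_eq]

theorem veblen_zero (β : Ordinal) : _root_.veblen 0 β = omega0 ^ β := by
  rw [veblen_def]; simp

theorem veblen_pos_def {α : Ordinal} (h : α ≠ 0) :
    _root_.veblen α = derivBFamily.{0,0} α (fun ξ _ => _root_.veblen ξ) := by
  rw [veblen_def, if_neg h]

theorem isNormal_veblen (α : Ordinal) : Order.IsNormal (_root_.veblen α) := by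
  induction α using Ordinal.induction with
  | h α ih =>
    rcases eq_or_ne α 0 with rfl | h
    · have h0 : _root_.veblen 0 = fun β => omega0 ^ β := by rw [veblen_def]; simp
      rw [h0]; exact isNormal_opow one_lt_omega0
    · rw [veblen_pos_def h]; exact isNormal_derivBFamily _

theorem veblen_fp {γ α : Ordinal} (h : γ < α) (β : Ordinal) :
    _root_.veblen γ (_root_.veblen α β) = _root_.veblen α β := by
  have hα : α ≠ 0 := fun e => not_lt_zero (e ▸ h)
  rw [veblen_pos_def hα]
  exact derivBFamily_fp (f := fun ξ (_ : ξ < α) => _root_.veblen ξ) (i := γ) (hi := h)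
    (isNormal_veblen γ) β

theorem veblen_fp_exists {α β : Ordinal} (hα : α ≠ 0)
    (h : ∀ γ < α, _root_.veblen γ β = β) : ∃ b, _root_.veblen α b = β := by
  rw [veblen_pos_def hα]
  exact (fp_iff_derivBFamily (fun i hi => _root_.isNormal_veblen i)).mp (fun i hi => h i hi)

theorem le_veblen (α β : Ordinal) : β ≤ _root_.veblen α β :=
  (_root_.isNormal_veblen α).strictMono.le_apply

theorem veblen_zero_strictMono : StrictMono (fun α => _root_.veblen α 0) := by
  intro γ α h
  have hα : α ≠ 0 := fun e => not_lt_zero (e ▸ h)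
  have h1 : 0 < _root_.veblen α 0 := by
    have := veblen_fp (pos_iff_ne_zero.mpr hα) 0
    rw [_root_.veblen_zero] at this
    calc 0 < omega0 ^ _root_.veblen α 0 := opow_pos _ omega0_pos
    _ = _root_.veblen α 0 := this
  calc _root_.veblen γ 0 < _root_.veblen γ (_root_.veblen α 0) := (_root_.isNormal_veblen γ).strictMono h1
  _ = _root_.veblen α 0 := veblen_fp h 0

theorem self_le_veblen_zero (α : Ordinal) : α ≤ _root_.veblen α 0 :=
  veblen_zero_strictMono.le_apply

theorem veblen_unique {a b c d : Ordinal} (h : _root_.veblen a b = _root_.veblen c d)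
    (hb : b < _root_.veblen a b) (hd : d < _root_.veblen c d) : a = c ∧ b = d := by
  rcases lt_trichotomy a c with hlt | rfl | hlt
  · exfalso
    have h1 : _root_.veblen a (_root_.veblen c d) = _root_.veblen c d := veblen_fp hlt d
    rw [← h] at h1
    have := (_root_.isNormal_veblen a).strictMono.injective h1
    rw [this] at hb; exact hb.false
  · exact ⟨rfl, (_root_.isNormal_veblen a).strictMono.injective h⟩
  · exfalso
    have h1 : _root_.veblen c (_root_.veblen a b) = _root_.veblen a b := veblen_fp hlt b
    rw [h] at h1
    have := (_root_.isNormal_veblen c).strictMono.injective h1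
    rw [this] at hd; exact hd.false

theorem stmt0 (β : Ordinal) (hβ : ∃ γ, β = Ordinal.omega0 ^ γ) :
    ∃! p : Ordinal × Ordinal, p.1 ≤ β ∧ p.2 < β ∧ β = _root_.veblen p.1 p.2 := by
  obtain ⟨n, hn⟩ := hβ
  have hβdef : β = omega0 ^ (n : Ordinal) := by rw [hn, opow_natCast]
  set γ₀ : Ordinal := (n : Ordinal)
  -- the set of γ where β is not a fixed point
  have hTne : (β + 1) ∈ {γ | β < _root_.veblen γ β} := by
    calc β < β + 1 := lt_add_one β
    _ ≤ _root_.veblen (β + 1) 0 := self_le_veblen_zero _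
    _ ≤ _root_.veblen (β + 1) β := (_root_.isNormal_veblen _).strictMono.monotone (zero_le (a := β))
  set β₁ := sInf {γ | β < _root_.veblen γ β} with hβ₁
  have hmem : β < _root_.veblen β₁ β := csInf_mem ⟨_, hTne⟩
  have hfix : ∀ γ < β₁, _root_.veblen γ β = β := by
    intro γ hγ
    have : γ ∉ {γ | β < _root_.veblen γ β} := notMem_of_lt_csInf hγ (OrderBot.bddBelow _)
    exact le_antisymm (not_lt.mp this) (le_veblen γ β)
  have hex : ∃ β₂, β₂ < β ∧ β = _root_.veblen β₁ β₂ := by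
    rcases eq_or_ne β₁ 0 with h0 | h0
    · refine ⟨γ₀, ?_, by rw [h0, _root_.veblen_zero, hβdef]⟩
      rcases lt_or_eq_of_le (hβdef ▸ right_le_opow γ₀ one_lt_omega0) with h | h
      · exact h
      · exfalso; rw [h0, _root_.veblen_zero, ← h, ← hβdef] at hmem; exact hmem.ne h
    · obtain ⟨β₂, hb2⟩ := veblen_fp_exists h0 hfix
      refine ⟨β₂, ?_, hb2.symm⟩
      by_contra hle
      have : _root_.veblen β₁ β ≤ _root_.veblen β₁ β₂ := (_root_.isNormal_veblen β₁).strictMono.monotone (not_lt.mp hle)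
      rw [hb2] at this
      exact (hmem.trans_le this).false
  obtain ⟨β₂, hlt2, heq⟩ := hex
  refine ⟨(β₁, β₂), ⟨?_, hlt2, heq⟩, ?_⟩
  · calc β₁ ≤ _root_.veblen β₁ 0 := self_le_veblen_zero _
    _ ≤ _root_.veblen β₁ β₂ := (_root_.isNormal_veblen _).strictMono.monotone (zero_le (a := _))
    _ = β := heq.symm
  · rintro ⟨a, b⟩ ⟨ha, hb, habeq⟩
    have := veblen_unique (a := a) (b := b) (c := β₁) (d := β₂)
      (by rw [← habeq, ← heq]) (habeq ▸ hb) (heq ▸ hlt2)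
    simp [Prod.ext_iff, this.1, this.2]
end

section
/- With B and ψ the relativised collapsing hierarchy: if γ ∈ B(δ) and γ < δ, then ψ(γ) < ψ(δ). -/
open Ordinal

-- Auxiliary: syntax trees for the closure, to bound its cardinality.
inductive ClT (θ α : Ordinal) : Type where
  | zero : ClT θ α
  | omB : ClT θ α
  | gam (β : Shrink (Set.Iic θ)) : ClT θ α
  | add (x y : ClT θ α) : ClT θ α
  | veb (x y : ClT θ α) : ClT θ α
  | psi (ξ : Shrink (Set.Iio α)) : ClT θ α

noncomputable def evalCl (θ α : Ordinal) (f : ∀ ξ, ξ < α → Ordinal) : ClT θ α → Ordinal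
  | .zero => 0
  | .omB => OmegaB θ
  | .gam β => Gamma ((equivShrink (Set.Iic θ)).symm β : Set.Iic θ)
  | .add x y => evalCl θ α f x + evalCl θ α f y
  | .veb x y => _root_.veblen (evalCl θ α f x) (evalCl θ α f y)
  | .psi ξ => f ((equivShrink (Set.Iio α)).symm ξ : Set.Iio α)
      ((equivShrink (Set.Iio α)).symm ξ).2

lemma closB_subset_range (θ α : Ordinal) (f : ∀ ξ, ξ < α → Ordinal) :
    closB θ α f ⊆ Set.range (evalCl θ α f) := by
  intro x hx
  refine hx _ ?_
  refine ⟨⟨.zero, rfl⟩, ⟨.omB, rfl⟩, ?_, ?_, ?_, ?_⟩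
  · intro β hβ
    exact ⟨.gam (equivShrink (Set.Iic θ) ⟨β, hβ⟩), by simp [evalCl]⟩
  · rintro _ ⟨a, rfl⟩ _ ⟨b, rfl⟩; exact ⟨.add a b, rfl⟩
  · rintro _ ⟨a, rfl⟩ _ ⟨b, rfl⟩; exact ⟨.veb a b, rfl⟩
  · intro ξ h _
    refine ⟨.psi (equivShrink (Set.Iio α) ⟨ξ, h⟩), ?_⟩
    simp only [evalCl, Equiv.symm_apply_apply]

lemma exists_notMem_closB (θ α : Ordinal) (f : ∀ ξ, ξ < α → Ordinal) :
    ∃ β, β ∉ closB θ α f := by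
  obtain ⟨b, hb⟩ := Ordinal.bddAbove_of_small (s := Set.range (evalCl θ α f))
  refine ⟨b + 1, fun h => ?_⟩
  have := hb (closB_subset_range θ α f h)
  rw [Ordinal.add_one_eq_succ, Order.succ_le_iff] at this
  exact this.false

lemma psiB_eq (θ α : Ordinal) :
    psiB θ α = sInf {β | β ∉ BB θ α} := by
  show WellFounded.fix Ordinal.lt_wf _ α = _
  rw [WellFounded.fix_eq]
  rfl

theorem stmt7 (θ γ δ : Ordinal) (h1 : γ ∈ BB θ δ) (h2 : γ < δ) :
    psiB θ γ < psiB θ δ := by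
  have hne : {β | β ∉ BB θ δ}.Nonempty := exists_notMem_closB θ δ _
  have hδ : psiB θ δ ∉ BB θ δ := by rw [psiB_eq]; exact csInf_mem hne
  have hγmem : psiB θ γ ∈ BB θ δ := by
    intro S hS
    exact hS.2.2.2.2.2 γ h2 (h1 S hS)
  have hmono : BB θ γ ⊆ BB θ δ := by
    intro x hx S hS
    exact hx S ⟨hS.1, hS.2.1, hS.2.2.1, hS.2.2.2.1, hS.2.2.2.2.1,
      fun ξ h hξ => hS.2.2.2.2.2 ξ (h.trans h2) hξ⟩
  have hle : psiB θ γ ≤ psiB θ δ := by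
    rw [psiB_eq, psiB_eq]
    exact csInf_le_csInf (OrderBot.bddBelow _) hne (fun b hb hb' => hb (hmono hb'))
  exact hle.lt_of_ne (fun h => hδ (h ▸ hγmem))
end
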